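/- Let a_1,...,a_v be pairwise disjoint adjacentable sequences and d_1,...,d_p be pairwise disjoint h-ordered strictly-h-increasing 'descending' sequences (sequences where no earlier element is below a later one in P) such that no two of the d_j are semi-overlapping. Then the total number of elements in the union of the d_j satisfies |d_1| + ... + |d_p| ≤ n + vp − (asc(a_1) + ... + asc(a_v)). In particular, D'_p + A'_v ≤ n + vp for all p, v ≥ 0. -/

import Mathlib

variable {α : Type*}

/-- `asc(S)`: one plus the number of consecutive ascents (in the partial order),
`0` for the empty sequence. -/
noncomputable def ascCount [Preorder α] (l : List α) : ℕ :=
  if l.isEmpty then 0 else 1 + Nat.card {p : α × α // p ∈ l.zip l.tail ∧ p.1 < p.2}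

/-- `desc(S)`: the length of the longest subsequence in which no earlier element
is strictly below a later one. -/
noncomputable def descCount [Preorder α] (l : List α) : ℕ :=
  sSup {m | ∃ t : List α, t.Sublist l ∧ t.Pairwise (fun a b => ¬ a < b) ∧ t.length = m}

/-- A sequence of distinct elements is adjacentable if every consecutive pair lies in `C`. -/
def IsAdjacentable (C : α → α → Prop) (l : List α) : Prop :=
  l.Nodup ∧ l.Chain' C

/-- A sequence of distinct elements is `h`-ordered if `h` strictly increases along it. -/
def IsHOrdered {n : ℕ} (h : α ≃ Fin n) (l : List α) : Prop :=
  l.Nodup ∧ l.Chain' (fun a b => h a < h b)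

/-- Two sequences are semi-overlapping if each contains an element `C`-below an
element of the other. -/
def SemiOverlapping (C : α → α → Prop) (s t : List α) : Prop :=
  (∃ x ∈ s, ∃ y ∈ t, C y x) ∧ (∃ x ∈ s, ∃ y ∈ t, C x y)

/-- A family of pairwise disjoint sequences. -/
def FamilyDisjoint {k : ℕ} (S : Fin k → List α) : Prop :=
  ∀ i j, i ≠ j → ∀ x, x ∈ S i → x ∉ S j

/-- `A'_k`: the maximum of `asc(S₁) + ⋯ + asc(S_k)` over `k` pairwise disjoint
adjacentable sequences. -/
noncomputable def Aval [Preorder α] (C : α → α → Prop) (k : ℕ) : ℕ :=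
  sSup {m | ∃ S : Fin k → List α, (∀ i, IsAdjacentable C (S i)) ∧ FamilyDisjoint S ∧
    m = ∑ i, ascCount (S i)}

/-- `D'_k`: the maximum of `desc(S₁) + ⋯ + desc(S_k)` over `k` pairwise disjoint,
pairwise non-semi-overlapping `h`-ordered sequences. -/
noncomputable def Dval [Preorder α] {n : ℕ} (h : α ≃ Fin n) (C : α → α → Prop) (k : ℕ) : ℕ :=
  sSup {m | ∃ S : Fin k → List α, (∀ i, IsHOrdered h (S i)) ∧ FamilyDisjoint S ∧
    (∀ i j, i ≠ j → ¬ SemiOverlapping C (S i) (S j)) ∧ m = ∑ i, descCount (S i)}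

/-- `f` (with `f k` playing the role of `λ_{k+1}`) is a partition of `n`. -/
def IsPartitionOf (n : ℕ) (f : ℕ → ℕ) : Prop :=
  (∀ k, f (k + 1) ≤ f k) ∧ ∃ N, (∑ k ∈ Finset.range N, f k = n) ∧ ∀ k, N ≤ k → f k = 0

/-- `f` and `g` are conjugate partitions of `n` (indexed from `0`, so `f k = λ_{k+1}`):
`μ_j = #{i : λ_i ≥ j}`. -/
def ConjugatePartitions (n : ℕ) (f g : ℕ → ℕ) : Prop :=
  IsPartitionOf n f ∧ IsPartitionOf n g ∧ ∀ j, g j = Nat.card {i : ℕ | j + 1 ≤ f i}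

/-- The key inequality of Section 6: for `v` disjoint adjacentable sequences `a` and `p`
disjoint, pairwise non-semi-overlapping, `h`-ordered descending sequences `d`,
`∑ |d_j| + ∑ asc(a_i) ≤ n + v·p`; in particular `D'_p + A'_v ≤ n + v·p`. -/
lemma natCard_mem_filter {β : Type*} {l : List β} (hl : l.Nodup) (Q : β → Prop) :
    Nat.card {x : β // x ∈ l ∧ Q x} = Nat.card {k : Fin l.length // Q (l.get k)} := by
  refine (Nat.card_congr (Equiv.ofBijective (fun k => ⟨l.get k.1, l.get_mem _, k.2⟩) ⟨?_, ?_⟩)).symm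
  · rintro ⟨k, hk⟩ ⟨m, hm⟩ hkm
    simp only [Subtype.mk.injEq] at hkm ⊢
    exact (List.nodup_iff_injective_get.mp hl) hkm
  · rintro ⟨x, hx, hQ⟩
    obtain ⟨k, hk⟩ := List.mem_iff_get.mp hx
    exact ⟨⟨k, hk ▸ hQ⟩, Subtype.ext hk⟩

open scoped Classical in
lemma ascCount_eq [Preorder α] (l : List α) (hnd : l.Nodup) (hne : l ≠ []) (x0 : α) :
    ascCount l = ((Finset.range l.length).filter
      (fun k => k ≠ 0 ∧ l.getD (k-1) x0 < l.getD k x0)).card + 1 := by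
  classical
  have hL : 0 < l.length := List.length_pos_iff.mpr hne
  set zl := l.zip l.tail with hzl
  have hzlen : zl.length = l.length - 1 := by
    simp [hzl, List.length_zip, Nat.min_def]
  have hznd : zl.Nodup := by
    have : (zl.map Prod.snd).Nodup := by
      rw [hzl, List.map_snd_zip (by simp [List.length_tail])]
      exact hnd.tail
    exact this.of_map _
  have h1 : ascCount l = 1 + Nat.card {p : α × α // p ∈ zl ∧ p.1 < p.2} := by
    rw [ascCount, if_neg (by simp [hne])]
  have h2 : Nat.card {k : Fin zl.length // (zl.get k).1 < (zl.get k).2} =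
      ((Finset.univ : Finset (Fin zl.length)).filter
        (fun k => (zl.get k).1 < (zl.get k).2)).card := by
    rw [Nat.card_eq_fintype_card, Fintype.card_subtype]
  have hget : ∀ k : Fin zl.length, zl.get k = (l.getD (k:ℕ) x0, l.getD ((k:ℕ)+1) x0) := by
    intro k
    have hk1 : (k:ℕ) < l.length := by have := k.2; omega
    have hk2 : (k:ℕ)+1 < l.length := by have := k.2; omega
    have hk3 : (k:ℕ) < l.tail.length := by simp [List.length_tail]; omega
    rw [List.getD_eq_getElem _ _ hk1, List.getD_eq_getElem _ _ hk2]
    simp [hzl, List.getElem_zip]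
  have hmaps : ∀ k ∈ (Finset.univ : Finset (Fin zl.length)).filter
        (fun k => (zl.get k).1 < (zl.get k).2), ((k:ℕ)+1) ∈ (Finset.range l.length).filter
      (fun k => k ≠ 0 ∧ l.getD (k-1) x0 < l.getD k x0) := by
    intro k hk
    simp only [Finset.mem_filter, Finset.mem_univ, true_and] at hk
    rw [hget k] at hk
    simp only [Finset.mem_filter, Finset.mem_range]
    exact ⟨by have := k.2; omega, by omega, by simpa using hk⟩
  have key : ((Finset.univ : Finset (Fin zl.length)).filter
        (fun k => (zl.get k).1 < (zl.get k).2)).card = ((Finset.range l.length).filter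
      (fun k => k ≠ 0 ∧ l.getD (k-1) x0 < l.getD k x0)).card := by
    refine Finset.card_bij (fun k _ => (k:ℕ)+1) hmaps (fun k _ m _ hkm => by exact Fin.ext (by omega)) ?_
    intro b hb
    simp only [Finset.mem_filter, Finset.mem_range] at hb
    obtain ⟨hbL, hb0, hblt⟩ := hb
    refine ⟨⟨b-1, by omega⟩, ?_, by simp only; omega⟩
    simp only [Finset.mem_filter, Finset.mem_univ, true_and]
    rw [hget]
    have hb1 : b - 1 + 1 = b := by omega
    simpa [hb1] using hblt
  rw [h1, natCard_mem_filter hznd, h2, key]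
  omega

lemma descend_of_hlt [Preorder α] {n : ℕ} {h : α ≃ Fin n} {t : List α}
    (ht : t.Chain' (fun a b => h a < h b)) (htd : t.Pairwise (fun x y => ¬ x < y))
    {x y : α} (hx : x ∈ t) (hy : y ∈ t) (hxy : h x < h y) : ¬ x < y := by
  haveI : IsTrans α (fun a b => h a < h b) := ⟨fun a b c hab hbc => lt_trans hab hbc⟩
  have hp := (List.isChain_iff_pairwise).mp ht
  obtain ⟨i, hi⟩ := List.mem_iff_get.mp hx
  obtain ⟨j, hj⟩ := List.mem_iff_get.mp hy
  rcases lt_trichotomy i j with hij | rfl | hij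
  · exact hi ▸ hj ▸ List.pairwise_iff_get.mp htd i j hij
  · rw [hi] at hj; subst hj; exact absurd hxy (lt_irrefl _)
  · have := hi ▸ hj ▸ List.pairwise_iff_get.mp hp j i hij
    exact absurd hxy (asymm this)

open scoped Classical in
lemma akey [PartialOrder α] {n : ℕ} (h : α ≃ Fin n)
    (C : α → α → Prop) (hCtrans : Transitive C)
    (hC1 : ∀ x y : α, x < y → h x < h y → C x y)
    (hC2 : ∀ x y : α, C x y → h x < h y)
    {p : ℕ} (d : Fin p → List α)
    (hd : ∀ j, IsHOrdered h (d j))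
    (hddesc : ∀ j, (d j).Pairwise (fun x y => ¬ x < y))
    (hdso : ∀ j j', j ≠ j' → ¬ SemiOverlapping C (d j) (d j'))
    (l : List α) (hlnd : l.Nodup) (hlch : l.Chain' C) :
    ascCount l ≤ (l.toFinset \ Finset.univ.biUnion (fun j => (d j).toFinset)).card + p := by
  classical
  rcases eq_or_ne l [] with rfl | hne
  · simp [ascCount]
  have hL : 0 < l.length := List.length_pos_iff.mpr hne
  set L := l.length with hLdef
  set x0 := l.head hne with hx0
  obtain ⟨g, hgdef⟩ : ∃ g : ℕ → α, g = fun k => l.getD k x0 := ⟨_, rfl⟩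
  have hgD : ∀ k, g k = l.getD k x0 := fun k => by rw [hgdef]
  have hgget : ∀ k (hk : k < L), g k = l.get ⟨k, hk⟩ := fun k hk => by
    rw [hgD]; exact List.getD_eq_getElem _ _ hk
  have hgmem : ∀ k, k < L → g k ∈ l := by
    intro k hk; rw [hgget k hk]; exact l.get_mem _
  -- chain facts
  haveI : IsTrans α C := ⟨fun a b c hab hbc => hCtrans hab hbc⟩
  have hpC : l.Pairwise C := (List.isChain_iff_pairwise).mp hlch
  have fC : ∀ k m, k < m → m < L → C (g k) (g m) := by
    intro k m hkm hmL
    rw [hgget k (lt_trans hkm hmL), hgget m hmL]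
    exact List.pairwise_iff_get.mp hpC ⟨k, lt_trans hkm hmL⟩ ⟨m, hmL⟩ hkm
  have fH : ∀ k m, k < m → m < L → h (g k) < h (g m) :=
    fun k m hkm hmL => hC2 _ _ (fC k m hkm hmL)
  have fNe : ∀ k m, k < m → m < L → g k ≠ g m :=
    fun k m hkm hmL heq => absurd (heq ▸ fH k m hkm hmL) (lt_irrefl _)
  -- ascending chains
  have fP0 : ∀ dt s, (∀ u, s ≤ u → u ≤ s + dt → g u < g (u+1)) → g s < g (s + dt + 1) := by
    intro dt
    induction dt with
    | zero => intro s hyp; simpa using hyp s le_rfl (by omega)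
    | succ dt ih =>
      intro s hyp
      have h1 : g s < g (s + dt + 1) := ih s (fun u h1 h2 => hyp u h1 (by omega))
      have h2 : g (s + dt + 1) < g (s + dt + 2) := hyp (s + dt + 1) (by omega) (by omega)
      exact lt_trans h1 h2
  have fP : ∀ s t, s < t → (∀ u, s ≤ u → u < t → g u < g (u+1)) → g s < g t := by
    intro s t hst hyp
    have ht : t = s + (t - s - 1) + 1 := by omega
    rw [ht]
    exact fP0 (t - s - 1) s (fun u h1 h2 => hyp u h1 (by omega))
  -- membership in D
  set Dmem : ℕ → Prop := fun k => ∃ j, g k ∈ d j with hDmemdef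
  -- the index set M
  set Mset : Finset ℕ := insert 0 ((Finset.range L).filter
      (fun k => k ≠ 0 ∧ g (k-1) < g k)) with hMsetdef
  have hMsub : ∀ k ∈ Mset, k < L := by
    intro k hk
    rw [hMsetdef, Finset.mem_insert, Finset.mem_filter, Finset.mem_range] at hk
    rcases hk with rfl | ⟨hk, _⟩
    · exact hL
    · exact hk
  have hMmem : ∀ k, k ≠ 0 → (k ∈ Mset ↔ (k < L ∧ g (k-1) < g k)) := by
    intro k hk0
    rw [hMsetdef, Finset.mem_insert, Finset.mem_filter, Finset.mem_range]
    constructor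
    · rintro (rfl | ⟨h1, _, h2⟩)
      · exact absurd rfl hk0
      · exact ⟨h1, h2⟩
    · rintro ⟨h1, h2⟩
      exact Or.inr ⟨h1, hk0, h2⟩
  have hascM : ascCount l = Mset.card := by
    rw [ascCount_eq l hlnd hne x0, hMsetdef, Finset.card_insert_of_notMem (by simp)]
    simp only [hgdef]
    convert rfl
  classical
  -- split M by membership in D
  set MD := Mset.filter Dmem with hMDdef
  set Mnd := Mset.filter (fun k => ¬ Dmem k) with hMnddef
  have hsplit1 : Mset.card = MD.card + Mnd.card :=
    (Finset.card_filter_add_card_filter_not _).symm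
  set Ex : ℕ → Prop := fun k => ∃ m ∈ MD, m < k ∧ ∃ j, g m ∈ d j ∧ g k ∈ d j with hExdef
  have hsplit2 : MD.card = (MD.filter Ex).card + (MD.filter (fun k => ¬ Ex k)).card :=
    (Finset.card_filter_add_card_filter_not _).symm
  -- non-extras ≤ p
  have hNX : (MD.filter (fun k => ¬ Ex k)).card ≤ p := by
    by_cases hp0 : p = 0
    · subst hp0
      have hMDe : MD = ∅ := Finset.eq_empty_of_forall_notMem (fun k hk => by
        rw [hMDdef, Finset.mem_filter] at hk
        obtain ⟨j, _⟩ := hk.2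
        exact Fin.elim0 j)
      simp [hMDe]
    · have hpos : 0 < p := Nat.pos_of_ne_zero hp0
      set f : ℕ → Fin p := fun k => if hk : Dmem k then hk.choose else ⟨0, hpos⟩ with hfdef
      have hfspec : ∀ k, Dmem k → g k ∈ d (f k) := by
        intro k hk
        rw [hfdef]
        simp only [dif_pos hk]
        exact hk.choose_spec
      have hcard := Finset.card_le_card_of_injOn f
        (fun k _ => Finset.mem_univ (f k)) (s := MD.filter (fun k => ¬ Ex k)) ?_
      · simpa using hcard
      intro k hk k' hk' hff
      rw [Finset.mem_coe, Finset.mem_filter] at hk hk'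
      obtain ⟨hkMD, hkNEx⟩ := hk
      obtain ⟨hk'MD, hk'NEx⟩ := hk'
      have hDk : Dmem k := (Finset.mem_filter.mp hkMD).2
      have hDk' : Dmem k' := (Finset.mem_filter.mp hk'MD).2
      by_contra hne'
      rcases lt_or_gt_of_ne hne' with hlt | hlt
      · exact hk'NEx ⟨k, hkMD, hlt, f k, hfspec k hDk, hff ▸ hfspec k' hDk'⟩
      · exact hkNEx ⟨k', hk'MD, hlt, f k', hfspec k' hDk', hff ▸ hfspec k hDk⟩
  -- run minima
  set Pm : ℕ → Prop := fun u => u = 0 ∨ ¬ (u < L ∧ g (u-1) < g u) with hPmdef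
  set r : ℕ → ℕ := fun k => Nat.findGreatest Pm k with hrdef
  have hrle : ∀ k, r k ≤ k := fun k => Nat.findGreatest_le k
  have hrP : ∀ k, Pm (r k) := fun k => Nat.findGreatest_spec (Nat.zero_le k) (Or.inl rfl)
  have hrgr : ∀ k u, r k < u → u ≤ k → u ≠ 0 ∧ u < L ∧ g (u-1) < g u := by
    intro k u h1 h2
    have hnp := Nat.findGreatest_is_greatest (P := Pm) h1 h2
    simp only [hPmdef, not_or, not_and, not_not, _root_.not_imp, not_lt] at hnp
    tauto
  -- facts about extras
  have hXfacts : ∀ k ∈ MD.filter Ex, r k < k ∧ (∀ u, r k ≤ u → u < k → ¬ Dmem u) ∧ r k ∉ Mset := by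
    intro k hk
    rw [Finset.mem_filter] at hk
    obtain ⟨hkMD, m, hmMD, hmk, j, hgmj, hgkj⟩ := hk
    have hkMset : k ∈ Mset := (Finset.mem_filter.mp hkMD).1
    have hkL : k < L := hMsub k hkMset
    have hk0 : k ≠ 0 := by omega
    have hkasc : g (k-1) < g k := ((hMmem k hk0).mp hkMset).2
    have hrk : r k < k := by
      rcases Nat.lt_or_ge (r k) k with h' | h'
      · exact h'
      · exfalso
        have hrkk : r k = k := le_antisymm (hrle k) h'
        have hP := hrP k
        rw [hPmdef, hrkk] at hP
        rcases hP with h0 | hh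
        · exact hk0 h0
        · exact hh ⟨hkL, hkasc⟩
    have hascs : ∀ u, r k ≤ u → u < k → g u < g (u+1) := by
      intro u h1 h2
      have := (hrgr k (u+1) (by omega) (by omega)).2.2
      simpa using this
    have hchain : ∀ s, r k ≤ s → s < k → g s < g k := fun s h1 h2 =>
      fP s k h2 (fun u hu1 hu2 => hascs u (le_trans h1 hu1) hu2)
    have hmlt : m < r k := by
      by_contra hge
      push_neg at hge
      have hlt : g m < g k := hchain m hge hmk
      exact descend_of_hlt (hd j).2 (hddesc j) hgmj hgkj (fH m k hmk hkL) hlt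
    have hfree : ∀ u, r k ≤ u → u < k → ¬ Dmem u := by
      intro u h1 h2 hDu
      rw [hDmemdef] at hDu
      obtain ⟨j', hj'⟩ := hDu
      have huL : u < L := by omega
      have hgu_lt : g u < g k := hchain u h1 h2
      by_cases hjj : j' = j
      · subst hjj
        exact descend_of_hlt (hd j').2 (hddesc j') hj' hgkj (fH u k h2 hkL) hgu_lt
      · have hCuk : C (g u) (g k) := hC1 _ _ hgu_lt (fH u k h2 hkL)
        have hCmu : C (g m) (g u) := fC m u (by omega) huL
        exact hdso j j' (fun hh => hjj hh.symm)
          ⟨⟨g k, hgkj, g u, hj', hCuk⟩, ⟨g m, hgmj, g u, hj', hCmu⟩⟩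
    refine ⟨hrk, hfree, ?_⟩
    intro hmem
    have hr0 : r k ≠ 0 := by omega
    have hms := (hMmem _ hr0).mp hmem
    have hP := hrP k
    rw [hPmdef] at hP
    rcases hP with h0 | hnot
    · exact hr0 h0
    · exact hnot hms
  -- extras ≤ |Y|
  set Y := (Finset.range L).filter (fun u => ¬ Dmem u ∧ u ∉ Mset) with hYdef
  have hXY : (MD.filter Ex).card ≤ Y.card := by
    apply Finset.card_le_card_of_injOn r
    · intro k hk
      obtain ⟨hrk, hfree, hnM⟩ := hXfacts k hk
      have hkL : k < L := hMsub k (Finset.mem_filter.mp (Finset.mem_filter.mp hk).1).1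
      rw [hYdef, Finset.mem_coe, Finset.mem_filter, Finset.mem_range]
      exact ⟨by omega, hfree _ le_rfl hrk, hnM⟩
    · intro k hk k' hk' hr
      rw [Finset.mem_coe] at hk hk'
      by_contra hne'
      rcases lt_or_gt_of_ne hne' with hlt | hlt
      · obtain ⟨_, hfree', _⟩ := hXfacts k' hk'
        have hDk : Dmem k := (Finset.mem_filter.mp (Finset.mem_filter.mp hk).1).2
        exact hfree' k (hr ▸ hrle k) hlt hDk
      · obtain ⟨_, hfree, _⟩ := hXfacts k hk
        have hDk' : Dmem k' := (Finset.mem_filter.mp (Finset.mem_filter.mp hk').1).2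
        exact hfree k' (hr ▸ hrle k') hlt hDk'
  -- Mnd and Y fit in Z
  set Z := (Finset.range L).filter (fun u => ¬ Dmem u) with hZdef
  have hMY : Mnd.card + Y.card ≤ Z.card := by
    rw [← Finset.card_union_of_disjoint ?_]
    · apply Finset.card_le_card
      intro u hu
      rcases Finset.mem_union.mp hu with hu | hu
      · rw [hMnddef, Finset.mem_filter] at hu
        exact Finset.mem_filter.mpr ⟨Finset.mem_range.mpr (hMsub u hu.1), hu.2⟩
      · rw [hYdef, Finset.mem_filter] at hu
        exact Finset.mem_filter.mpr ⟨hu.1, hu.2.1⟩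
    · rw [Finset.disjoint_left]
      intro u hu hu'
      rw [hMnddef, Finset.mem_filter] at hu
      rw [hYdef, Finset.mem_filter] at hu'
      exact hu'.2.2 hu.1
  -- Z in terms of elements
  have hZcard : Z.card = (l.toFinset \ Finset.univ.biUnion (fun j => (d j).toFinset)).card := by
    apply Finset.card_bij (fun u _ => g u)
    · intro u hu
      rw [hZdef, Finset.mem_filter, Finset.mem_range] at hu
      rw [Finset.mem_sdiff, List.mem_toFinset]
      refine ⟨hgmem u hu.1, ?_⟩
      intro hmem
      rw [Finset.mem_biUnion] at hmem
      obtain ⟨j, _, hj⟩ := hmem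
      exact hu.2 ⟨j, List.mem_toFinset.mp hj⟩
    · intro u hu u' hu' heq
      rw [hZdef, Finset.mem_filter, Finset.mem_range] at hu hu'
      by_contra hne'
      rcases lt_or_gt_of_ne hne' with hlt | hlt
      · exact fNe u u' hlt hu'.1 heq
      · exact fNe u' u hlt hu.1 heq.symm
    · intro x hx
      rw [Finset.mem_sdiff, List.mem_toFinset] at hx
      obtain ⟨kk, hkk⟩ := List.mem_iff_get.mp hx.1
      have hgx : g (kk : ℕ) = x := by
        rw [hgget _ kk.2]
        simpa using hkk
      refine ⟨(kk : ℕ), ?_, hgx⟩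
      rw [hZdef, Finset.mem_filter, Finset.mem_range]
      refine ⟨kk.2, ?_⟩
      rintro ⟨j, hj⟩
      apply hx.2
      rw [Finset.mem_biUnion]
      exact ⟨j, Finset.mem_univ j, List.mem_toFinset.mpr (hgx ▸ hj)⟩
  omega

lemma main_ineq [PartialOrder α] {n : ℕ} (h : α ≃ Fin n)
    (C : α → α → Prop) (hCtrans : Transitive C)
    (hC1 : ∀ x y : α, x < y → h x < h y → C x y)
    (hC2 : ∀ x y : α, C x y → h x < h y)
    {v p : ℕ} (a : Fin v → List α) (d : Fin p → List α)
    (ha : ∀ i, IsAdjacentable C (a i)) (hadisj : FamilyDisjoint a)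
    (hd : ∀ j, IsHOrdered h (d j))
    (hddesc : ∀ j, (d j).Pairwise (fun x y => ¬ x < y))
    (hddisj : FamilyDisjoint d)
    (hdso : ∀ j j', j ≠ j' → ¬ SemiOverlapping C (d j) (d j')) :
    (∑ j, (d j).length) + (∑ i, ascCount (a i)) ≤ n + v * p := by
  classical
  haveI : Fintype α := Fintype.ofEquiv (Fin n) h.symm
  have hcard : Fintype.card α = n := by
    rw [Fintype.card_congr h, Fintype.card_fin]
  set Dfin := Finset.univ.biUnion (fun j => (d j).toFinset) with hDfin
  have h1 : ∀ i, ascCount (a i) ≤ ((a i).toFinset \ Dfin).card + p := fun i =>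
    akey h C hCtrans hC1 hC2 d hd hddesc hdso (a i) (ha i).1 (ha i).2
  have h2 : ∑ i, ascCount (a i) ≤ (∑ i, ((a i).toFinset \ Dfin).card) + v * p := by
    calc ∑ i, ascCount (a i) ≤ ∑ i, (((a i).toFinset \ Dfin).card + p) :=
          Finset.sum_le_sum (fun i _ => h1 i)
      _ = (∑ i, ((a i).toFinset \ Dfin).card) + v * p := by
          rw [Finset.sum_add_distrib, Finset.sum_const, Finset.card_univ, Fintype.card_fin,
            smul_eq_mul]
  have h3 : ∑ j, (d j).length = Dfin.card := by
    rw [hDfin, Finset.card_biUnion]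
    · exact Finset.sum_congr rfl (fun j _ => (List.toFinset_card_of_nodup (hd j).1).symm)
    · intro j _ j' _ hjj
      rw [Function.onFun, Finset.disjoint_left]
      intro x hx hx'
      exact hddisj j j' hjj x (List.mem_toFinset.mp hx) (List.mem_toFinset.mp hx')
  set U := Finset.univ.biUnion (fun i => (a i).toFinset \ Dfin) with hU
  have hUcard : U.card = ∑ i, ((a i).toFinset \ Dfin).card := by
    rw [hU, Finset.card_biUnion]
    intro i _ i' _ hii
    rw [Function.onFun, Finset.disjoint_left]
    intro x hx hx'
    rw [Finset.mem_sdiff, List.mem_toFinset] at hx hx'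
    exact hadisj i i' hii x hx.1 hx'.1
  have hDU : Disjoint Dfin U := by
    rw [Finset.disjoint_right]
    intro x hx
    rw [hU, Finset.mem_biUnion] at hx
    obtain ⟨i, _, hx⟩ := hx
    exact (Finset.mem_sdiff.mp hx).2
  have h4 : Dfin.card + U.card ≤ n := by
    rw [← Finset.card_union_of_disjoint hDU, ← hcard]
    exact Finset.card_le_univ _
  omega

theorem sum_desc_add_sum_asc_le [PartialOrder α] {n : ℕ} (h : α ≃ Fin n)
    (C : α → α → Prop) (hCtrans : Transitive C)
    (hC1 : ∀ x y : α, x < y → h x < h y → C x y)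
    (hC2 : ∀ x y : α, C x y → h x < h y)
    {v p : ℕ} (a : Fin v → List α) (d : Fin p → List α)
    (ha : ∀ i, IsAdjacentable C (a i)) (hadisj : FamilyDisjoint a)
    (hd : ∀ j, IsHOrdered h (d j))
    (hddesc : ∀ j, (d j).Pairwise (fun x y => ¬ x < y))
    (hddisj : FamilyDisjoint d)
    (hdso : ∀ j j', j ≠ j' → ¬ SemiOverlapping C (d j) (d j')) :
    (∑ j, (d j).length) + (∑ i, ascCount (a i)) ≤ n + v * p ∧
      Dval h C p + Aval C v ≤ n + v * p := by
  classical
  refine ⟨main_ineq h C hCtrans hC1 hC2 a d ha hadisj hd hddesc hddisj hdso, ?_⟩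
  -- generic facts about descCount
  have hDCne : ∀ l : List α, {m | ∃ t : List α, t.Sublist l ∧
      t.Pairwise (fun a b => ¬ a < b) ∧ t.length = m}.Nonempty :=
    fun l => ⟨0, [], List.nil_sublist l, List.Pairwise.nil, rfl⟩
  have hdesc_le : ∀ l : List α, descCount l ≤ l.length := by
    intro l
    apply csSup_le (hDCne l)
    rintro m ⟨t, hsub, _, rfl⟩
    exact hsub.length_le
  have hdesc_bdd : ∀ l : List α,
      BddAbove {m | ∃ t : List α, t.Sublist l ∧ t.Pairwise (fun a b => ¬ a < b) ∧ t.length = m} := by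
    intro l
    refine ⟨l.length, ?_⟩
    rintro m ⟨t, hsub, _, rfl⟩
    exact hsub.length_le
  have hdesc_spec : ∀ l : List α, ∃ t : List α, t.Sublist l ∧ t.Pairwise (fun a b => ¬ a < b) ∧
      t.length = descCount l := fun l =>
    Nat.sSup_mem (hDCne l) (hdesc_bdd l)
  have hdesc_nil : descCount ([] : List α) = 0 :=
    Nat.le_zero.mp (hdesc_le [])
  have hasc_nil : ascCount ([] : List α) = 0 := by simp [ascCount]
  -- key pairing bound
  have hpair : ∀ m1 ∈ {m | ∃ S : Fin p → List α, (∀ i, IsHOrdered h (S i)) ∧ FamilyDisjoint S ∧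
      (∀ i j, i ≠ j → ¬ SemiOverlapping C (S i) (S j)) ∧ m = ∑ i, descCount (S i)},
      ∀ m2 ∈ {m | ∃ S : Fin v → List α, (∀ i, IsAdjacentable C (S i)) ∧ FamilyDisjoint S ∧
      m = ∑ i, ascCount (S i)}, m1 + m2 ≤ n + v * p := by
    rintro m1 ⟨S, hS, hSdisj, hSso, rfl⟩ m2 ⟨A, hA, hAdisj, rfl⟩
    choose t hts htp htl using fun j => hdesc_spec (S j)
    have htsub : ∀ j, ∀ x, x ∈ t j → x ∈ S j := fun j x hx => (hts j).subset hx
    haveI : IsTrans α (fun a b : α => h a < h b) := ⟨fun a b c hab hbc => lt_trans hab hbc⟩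
    have key := main_ineq h C hCtrans hC1 hC2 A t hA hAdisj ?_ ?_ ?_ ?_
    · calc (∑ j, descCount (S j)) + ∑ i, ascCount (A i)
          = (∑ j, (t j).length) + ∑ i, ascCount (A i) := by
            congr 1
            exact Finset.sum_congr rfl (fun j _ => (htl j).symm)
        _ ≤ n + v * p := key
    · intro j
      refine ⟨(hts j).nodup (hS j).1, ?_⟩
      exact List.Pairwise.isChain
        (((List.isChain_iff_pairwise).mp (hS j).2).sublist (hts j))
    · exact htp
    · exact fun i j hij x hx hx' => hSdisj i j hij x (htsub i x hx) (htsub j x hx')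
    · intro j j' hjj hso
      refine hSso j j' hjj ?_
      obtain ⟨⟨x, hx, y, hy, hC⟩, ⟨x', hx', y', hy', hC'⟩⟩ := hso
      exact ⟨⟨x, htsub _ _ hx, y, htsub _ _ hy, hC⟩, ⟨x', htsub _ _ hx', y', htsub _ _ hy', hC'⟩⟩
  -- nonemptiness of both sets
  have hDne : (0:ℕ) ∈ {m | ∃ S : Fin p → List α, (∀ i, IsHOrdered h (S i)) ∧ FamilyDisjoint S ∧
      (∀ i j, i ≠ j → ¬ SemiOverlapping C (S i) (S j)) ∧ m = ∑ i, descCount (S i)} := by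
    refine ⟨fun _ => [], fun i => ⟨List.nodup_nil, List.isChain_nil⟩, fun i j _ x hx => absurd hx (List.not_mem_nil), fun i j _ hso => by
      obtain ⟨⟨x, hx, _⟩, _⟩ := hso
      exact absurd hx (List.not_mem_nil), by simp [hdesc_nil]⟩
  have hAne : (0:ℕ) ∈ {m | ∃ S : Fin v → List α, (∀ i, IsAdjacentable C (S i)) ∧ FamilyDisjoint S ∧
      m = ∑ i, ascCount (S i)} := by
    refine ⟨fun _ => [], fun i => ⟨List.nodup_nil, List.isChain_nil⟩,
      fun i j _ x hx => absurd hx (List.not_mem_nil), by simp [hasc_nil]⟩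
  -- combine
  have hDle : Dval h C p ≤ n + v * p := by
    apply csSup_le ⟨0, hDne⟩
    intro m1 hm1
    simpa using hpair m1 hm1 0 hAne
  have hAle : ∀ m1, m1 ∈ {m | ∃ S : Fin p → List α, (∀ i, IsHOrdered h (S i)) ∧ FamilyDisjoint S ∧
      (∀ i j, i ≠ j → ¬ SemiOverlapping C (S i) (S j)) ∧ m = ∑ i, descCount (S i)} →
      Aval C v ≤ n + v * p - m1 := by
    intro m1 hm1
    apply csSup_le ⟨0, hAne⟩
    intro m2 hm2
    exact Nat.le_sub_of_add_le (by rw [Nat.add_comm]; exact hpair m1 hm1 m2 hm2)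
  have hval : Dval h C p ≤ n + v * p - Aval C v := by
    apply csSup_le ⟨0, hDne⟩
    intro m1 hm1
    have hm1le : m1 ≤ n + v * p := by simpa using hpair m1 hm1 0 hAne
    have := hAle m1 hm1
    omega
  have hAle' : Aval C v ≤ n + v * p := by simpa using hAle 0 hDne
  omega
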